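/- Let p(x,y) = M(x)y² + a(x)y + b(x) and q(x,y) = N(x)y² + c(x)y + d(x) be polynomials in ℝ[x,y], where M,a,b,N,c,d ∈ ℝ[x]. Let R₀(x) be the 0-subresultant in y of p and q (as polynomials in y of formal degree 2), write R₀(x) = b₀ + b₁x + ⋯ + b_l x^l with b_l ≠ 0 its leading coefficient. (Part 1) If (i) R₀(x) has no common real zeros with M(x) and none with N(x), and (ii) there exists z ∈ ℝ with b_l·R₀(z) < 0, then there exists (α,β) ∈ ℝ² with p(α,β) = q(α,β) = 0. (Part 2) If instead of (i) one assumes (i′) R₀(x) has no common real zeros with N(x) and there exists α ∈ ℝ with R₀(α) = M(α) = 0, while keeping (ii), then there exists β ∈ ℝ with p(α,β) = q(α,β) = 0 if and only if a(α) ≠ 0, or p(α,y) is identically zero as a polynomial in y and c(α)² − 4N(α)d(α) ≥ 0. -/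

import Mathlib

/-- The Sylvester matrix of two polynomials of formal degrees `n` and `m`,
given by their coefficient functions `P` and `Q` (`P i` is the coefficient of
`yⁱ`).  Its first `m` rows contain the coefficient vector `(P n, …, P 0)`
successively shifted to the right, and its last `n` rows contain the
coefficient vector `(Q m, …, Q 0)` in reversed shift order. -/
def sylvesterMat {R : Type*} [CommRing R] (n m : ℕ) (P Q : ℕ → R) :
    Matrix (Fin (n + m)) (Fin (n + m)) R :=
  Matrix.of fun i s =>
    if (i : ℕ) < m then
      (if (i : ℕ) ≤ (s : ℕ) ∧ (s : ℕ) ≤ (i : ℕ) + n then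
        P (n - ((s : ℕ) - (i : ℕ))) else 0)
    else
      (if n - 1 - ((i : ℕ) - m) ≤ (s : ℕ) ∧ (s : ℕ) ≤ n - 1 - ((i : ℕ) - m) + m then
        Q (m + n - 1 - ((i : ℕ) - m) - (s : ℕ)) else 0)

/-- The `k`-subresultant: the determinant of the matrix obtained from the
Sylvester matrix by deleting its first `k` and last `k` rows and columns. -/
def subresultant {R : Type*} [CommRing R] (n m : ℕ) (P Q : ℕ → R) (k : ℕ) : R :=
  Matrix.det (Matrix.of fun r c : Fin (n + m - 2 * k) =>
    sylvesterMat n m P Q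
      ⟨k + (r : ℕ), by have := r.isLt; omega⟩
      ⟨k + (c : ℕ), by have := c.isLt; omega⟩)

theorem det_fin_four' {R : Type*} [CommRing R] (A : Matrix (Fin 4) (Fin 4) R) :
    A.det =
      A 0 0 * (A 1 1 * (A 2 2 * A 3 3 - A 2 3 * A 3 2) - A 1 2 * (A 2 1 * A 3 3 - A 2 3 * A 3 1)
        + A 1 3 * (A 2 1 * A 3 2 - A 2 2 * A 3 1))
      - A 0 1 * (A 1 0 * (A 2 2 * A 3 3 - A 2 3 * A 3 2) - A 1 2 * (A 2 0 * A 3 3 - A 2 3 * A 3 0)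
        + A 1 3 * (A 2 0 * A 3 2 - A 2 2 * A 3 0))
      + A 0 2 * (A 1 0 * (A 2 1 * A 3 3 - A 2 3 * A 3 1) - A 1 1 * (A 2 0 * A 3 3 - A 2 3 * A 3 0)
        + A 1 3 * (A 2 0 * A 3 1 - A 2 1 * A 3 0))
      - A 0 3 * (A 1 0 * (A 2 1 * A 3 2 - A 2 2 * A 3 1) - A 1 1 * (A 2 0 * A 3 2 - A 2 2 * A 3 0)
        + A 1 2 * (A 2 0 * A 3 1 - A 2 1 * A 3 0)) := by
  have h1 : (Fin.succ 2 : Fin 4) = 3 := rfl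
  have h2 : Fin.succAbove (2:Fin 4) (2:Fin 3) = 3 := rfl
  have h3 : Fin.succAbove (1:Fin 4) (2:Fin 3) = 3 := rfl
  have h4 : (Fin.castSucc 2 : Fin 4) = 2 := rfl
  have h5 : Fin.succAbove (3:Fin 4) (2:Fin 3) = 2 := rfl
  simp [Matrix.det_succ_row_zero, Fin.sum_univ_succ, Matrix.det_fin_three, h1, h2, h3, h4, h5]
  ring

theorem subres_formula (M a b N c d : Polynomial ℝ) :
    subresultant 2 2
      (fun i => if i = 0 then b else if i = 1 then a else if i = 2 then M else 0)
      (fun i => if i = 0 then d else if i = 1 then c else if i = 2 then N else 0) 0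
    = (M*c - N*a)*(a*d - b*c) - (M*d - N*b)^2 := by
  have step : subresultant 2 2
      (fun i => if i = 0 then b else if i = 1 then a else if i = 2 then M else 0)
      (fun i => if i = 0 then d else if i = 1 then c else if i = 2 then N else 0) 0
      = Matrix.det !![M,a,b,0; 0,M,a,b; 0,N,c,d; N,c,d,0] := by
    apply congrArg Matrix.det
    ext i j
    fin_cases i <;> fin_cases j <;> rfl
  rw [step, det_fin_four']
  norm_num [Matrix.cons_val_zero, Matrix.cons_val_one, Matrix.head_cons, Matrix.cons_val_two, Matrix.cons_val_three, Matrix.tail_cons]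
  ring

/-- When the cross-term is nonzero, a common root exists explicitly. -/
theorem ptA (m a b n c d : ℝ)
    (h0 : (m*c - n*a)*(a*d - b*c) - (m*d - n*b)^2 = 0)
    (hu : n*a - m*c ≠ 0) :
    ∃ β : ℝ, m*β^2 + a*β + b = 0 ∧ n*β^2 + c*β + d = 0 := by
  set β := (m*d - n*b)/(n*a - m*c) with hβ
  have hβu : β * (n*a - m*c) = m*d - n*b := div_mul_cancel₀ _ hu
  have hu2 : (n*a - m*c)^2 ≠ 0 := pow_ne_zero 2 hu
  refine ⟨β, ?_, ?_⟩
  · have hP : (m*β^2 + a*β + b) * (n*a - m*c)^2 = 0 := by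
      linear_combination (m*(β*(n*a - m*c) + (m*d - n*b)) + a*(n*a - m*c)) * hβu
        + (-m) * h0
    exact (mul_eq_zero.mp hP).resolve_right hu2
  · have hQ : (n*β^2 + c*β + d) * (n*a - m*c)^2 = 0 := by
      linear_combination (n*(β*(n*a - m*c) + (m*d - n*b)) + c*(n*a - m*c)) * hβu
        + (-n) * h0
    exact (mul_eq_zero.mp hQ).resolve_right hu2

/-- A quadratic with nonzero leading coefficient and nonnegative discriminant
has a real root. -/
theorem ptQuad (m aa bb : ℝ) (hm : m ≠ 0) (hd : 0 ≤ aa^2 - 4*m*bb) :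
    ∃ β : ℝ, m*β^2 + aa*β + bb = 0 := by
  set s := Real.sqrt (aa^2 - 4*m*bb) with hsdef
  have hs : s^2 = aa^2 - 4*m*bb := Real.sq_sqrt hd
  set β := (-aa + s)/(2*m) with hβ
  have h2m : (2*m) ≠ 0 := by simpa using hm
  have hβu : β * (2*m) = -aa + s := div_mul_cancel₀ _ h2m
  have hm2 : (2*m)^2 ≠ 0 := pow_ne_zero 2 h2m
  refine ⟨β, ?_⟩
  have hP : (m*β^2 + aa*β + bb) * (2*m)^2 = 0 := by
    linear_combination (m*(β*(2*m) + (-aa + s)) + aa*(2*m)) * hβu + m * hs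
  exact (mul_eq_zero.mp hP).resolve_right hm2

set_option maxHeartbeats 1000000 in
theorem common_zero_deg2_deg2
    (M a b N c d : Polynomial ℝ)
    (R₀ : Polynomial ℝ)
    (hR₀ : R₀ = subresultant 2 2
      (fun i => if i = 0 then b else if i = 1 then a else if i = 2 then M else 0)
      (fun i => if i = 0 then d else if i = 1 then c else if i = 2 then N else 0) 0) :
    (((∀ x : ℝ, ¬(R₀.eval x = 0 ∧ M.eval x = 0)) ∧
      (∀ x : ℝ, ¬(R₀.eval x = 0 ∧ N.eval x = 0)) ∧
      (∃ z : ℝ, R₀.leadingCoeff * R₀.eval z < 0)) →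
      ∃ α β : ℝ,
        M.eval α * β ^ 2 + a.eval α * β + b.eval α = 0 ∧
        N.eval α * β ^ 2 + c.eval α * β + d.eval α = 0) ∧
    (∀ α : ℝ,
      ((∀ x : ℝ, ¬(R₀.eval x = 0 ∧ N.eval x = 0)) ∧
        R₀.eval α = 0 ∧ M.eval α = 0 ∧
        (∃ z : ℝ, R₀.leadingCoeff * R₀.eval z < 0)) →
      ((∃ β : ℝ,
          M.eval α * β ^ 2 + a.eval α * β + b.eval α = 0 ∧
          N.eval α * β ^ 2 + c.eval α * β + d.eval α = 0) ↔
        (a.eval α ≠ 0 ∨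
          ((M.eval α = 0 ∧ a.eval α = 0 ∧ b.eval α = 0) ∧
            (c.eval α) ^ 2 - 4 * N.eval α * d.eval α ≥ 0)))) := by
  have key : R₀ = (M*c - N*a)*(a*d - b*c) - (M*d - N*b)^2 := by
    rw [hR₀]; exact subres_formula M a b N c d
  have hev : ∀ x : ℝ,
      R₀.eval x = (M.eval x * c.eval x - N.eval x * a.eval x) *
        (a.eval x * d.eval x - b.eval x * c.eval x) -
        (M.eval x * d.eval x - N.eval x * b.eval x)^2 := by
    intro x; rw [key]; simp
  constructor
  · rintro ⟨hM, hN, z, hz⟩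
    have hR0ne : R₀ ≠ 0 := by intro h; rw [h] at hz; simp at hz
    have hbl : R₀.leadingCoeff ≠ 0 := Polynomial.leadingCoeff_ne_zero.mpr hR0ne
    set L := R₀.leadingCoeff with hL
    set f : ℝ → ℝ := fun x => L * R₀.eval x with hf
    have hcont : Continuous f := continuous_const.mul R₀.continuous
    have hfz : f z < 0 := hz
    have hdeg : 0 < R₀.degree := by
      by_contra hd
      push_neg at hd
      have hC := Polynomial.eq_C_of_degree_le_zero hd
      have h1 : R₀.eval z = R₀.coeff 0 := by rw [hC]; simp
      have h2 : L = R₀.coeff 0 := by rw [hL, hC]; simp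
      rw [h1, h2] at hz
      exact absurd hz (mul_self_nonneg _).not_gt
    have hP : Filter.Tendsto (fun x => (Polynomial.C L * R₀).eval x)
        Filter.atTop Filter.atTop := by
      apply Polynomial.tendsto_atTop_of_leadingCoeff_nonneg
      · rwa [Polynomial.degree_C_mul hbl]
      · rw [Polynomial.leadingCoeff_mul, Polynomial.leadingCoeff_C]
        exact mul_self_nonneg L
    obtain ⟨w, hw⟩ := ((hP.eventually_gt_atTop 0).and (Filter.eventually_gt_atTop z)).exists
    have hfw : 0 < f w := by
      have h := hw.1
      rw [Polynomial.eval_mul, Polynomial.eval_C] at h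
      exact h
    have hzw : z < w := hw.2
    set T : Set ℝ := {x | x ≤ w ∧ f x < 0} with hT
    have hzT : z ∈ T := ⟨hzw.le, hfz⟩
    have hTne : T.Nonempty := ⟨z, hzT⟩
    have hbdd : BddAbove T := ⟨w, fun x hx => hx.1⟩
    set α := sSup T with hα
    have hαw : α ≤ w := csSup_le hTne fun x hx => hx.1
    have hfα_le : f α ≤ 0 := by
      have h1 : α ∈ closure T := csSup_mem_closure hTne hbdd
      have h2 : closure T ⊆ {x | f x ≤ 0} :=
        closure_minimal (fun x hx => le_of_lt hx.2) (isClosed_le hcont continuous_const)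
      exact h2 h1
    have hαltw : α < w := lt_of_le_of_ne hαw (by intro hcontr; rw [hcontr] at hfα_le; linarith)
    have hfα : f α = 0 := by
      rcases lt_or_eq_of_le hfα_le with h | h
      · exfalso
        have hopen : IsOpen {x : ℝ | f x < 0} := isOpen_lt hcont continuous_const
        obtain ⟨ε, hε, hball⟩ := Metric.isOpen_iff.mp hopen α h
        obtain ⟨t, htα, htle, htw⟩ : ∃ t : ℝ, α < t ∧ t ≤ α + ε/2 ∧ t ≤ w :=
          ⟨min (α + ε/2) ((α + w)/2), lt_min (by linarith) (by linarith),
            min_le_left _ _, le_trans (min_le_right _ _) (by linarith)⟩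
        have htball : t ∈ Metric.ball α ε := by
          rw [Metric.mem_ball, Real.dist_eq, abs_lt]
          constructor <;> linarith
        have htT : t ∈ T := ⟨htw, hball htball⟩
        have : t ≤ α := le_csSup hbdd htT
        linarith
      · exact h
    have hRα : R₀.eval α = 0 := by
      rcases mul_eq_zero.mp hfα with h | h
      · exact absurd h hbl
      · exact h
    have hm : M.eval α ≠ 0 := fun h => hM α ⟨hRα, h⟩
    have hn : N.eval α ≠ 0 := fun h => hN α ⟨hRα, h⟩
    have h0 : (M.eval α * c.eval α - N.eval α * a.eval α) *
        (a.eval α * d.eval α - b.eval α * c.eval α) -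
        (M.eval α * d.eval α - N.eval α * b.eval α)^2 = 0 := (hev α).symm.trans hRα
    by_cases hu : N.eval α * a.eval α - M.eval α * c.eval α = 0
    · -- proportional case
      have hv : M.eval α * d.eval α - N.eval α * b.eval α = 0 := by
        have hsq : (M.eval α * d.eval α - N.eval α * b.eval α)^2 = 0 := by
          linear_combination (-1) * h0 - (a.eval α * d.eval α - b.eval α * c.eval α) * hu
        exact pow_eq_zero_iff (by norm_num) |>.mp hsq
      have hdisc : 0 ≤ (a.eval α)^2 - 4 * M.eval α * b.eval α := by
        by_contra hlt
        push_neg at hlt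
        have hU1 : IsOpen {x : ℝ | (a.eval x)^2 - 4 * M.eval x * b.eval x < 0} :=
          isOpen_lt (by fun_prop) continuous_const
        have hU2 : IsOpen {x : ℝ | M.eval x ≠ 0} := isOpen_ne.preimage M.continuous
        have hUopen : IsOpen ({x : ℝ | (a.eval x)^2 - 4 * M.eval x * b.eval x < 0}
            ∩ {x : ℝ | M.eval x ≠ 0}) := hU1.inter hU2
        obtain ⟨ε, hε, hball⟩ := Metric.isOpen_iff.mp hUopen α ⟨hlt, hm⟩
        -- a point slightly below α with f < 0
        obtain ⟨t, htT, htgt⟩ := exists_lt_of_lt_csSup hTne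
          (show α - ε < sSup T by rw [← hα]; linarith)
        have htle : t ≤ α := le_csSup hbdd htT
        have htball : t ∈ Metric.ball α ε := by
          rw [Metric.mem_ball, Real.dist_eq, abs_lt]
          constructor <;> linarith
        -- a point slightly above α with f > 0
        obtain ⟨w', hαw', hw'w, hw'ε⟩ : ∃ w', α < w' ∧ w' ≤ w ∧ w' ≤ α + ε :=
          ⟨min w (α + ε), lt_min hαltw (by linarith), min_le_left _ _, min_le_right _ _⟩
        obtain ⟨v, hvI, hvroot⟩ : ∃ v ∈ Set.Ioo α w', ¬ R₀.IsRoot v := by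
          by_contra hcon
          push_neg at hcon
          exact (Set.Ioo_infinite hαw')
            ((Polynomial.finite_setOf_isRoot hR0ne).subset hcon)
        have hvw : v ≤ w := le_trans hvI.2.le hw'w
        have hfv_nonneg : 0 ≤ f v := by
          by_contra hneg
          push_neg at hneg
          have hvT : v ∈ T := ⟨hvw, hneg⟩
          have : v ≤ α := le_csSup hbdd hvT
          linarith [hvI.1]
        have hfvne : f v ≠ 0 := by
          intro h
          exact hvroot ((mul_eq_zero.mp h).resolve_left hbl)
        have hfv : 0 < f v := lt_of_le_of_ne hfv_nonneg (Ne.symm hfvne)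
        have hvball : v ∈ Metric.ball α ε := by
          rw [Metric.mem_ball, Real.dist_eq, abs_lt]
          have h1 := hvI.1
          have h2 : v < α + ε := lt_of_lt_of_le hvI.2 hw'ε
          constructor <;> linarith
        -- a point in the ball where R₀.eval > 0
        have hft : L * R₀.eval t < 0 := htT.2
        have hfv' : 0 < L * R₀.eval v := hfv
        have hRpos : ∃ x ∈ Metric.ball α ε, 0 < R₀.eval x := by
          rcases lt_or_gt_of_ne hbl with hLneg | hLpos
          · refine ⟨t, htball, ?_⟩
            rcases lt_trichotomy (R₀.eval t) 0 with hcase | hcase | hcase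
            · nlinarith
            · rw [hcase, mul_zero] at hft; linarith
            · exact hcase
          · refine ⟨v, hvball, ?_⟩
            rcases lt_trichotomy (R₀.eval v) 0 with hcase | hcase | hcase
            · nlinarith
            · rw [hcase, mul_zero] at hfv'; linarith
            · exact hcase
        obtain ⟨x, hxball, hxpos⟩ := hRpos
        obtain ⟨hg0, hmx0⟩ := hball hxball
        have hg : (a.eval x)^2 - 4 * M.eval x * b.eval x < 0 := hg0
        have hmx : M.eval x ≠ 0 := hmx0
        have hid : 4*(M.eval x)^2 * (R₀.eval x) =
            -(2*M.eval x*(M.eval x*d.eval x - N.eval x*b.eval x)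
              - a.eval x*(M.eval x*c.eval x - N.eval x*a.eval x))^2
            + ((a.eval x)^2 - 4*M.eval x*b.eval x)
              * (M.eval x*c.eval x - N.eval x*a.eval x)^2 := by
          rw [hev x]; ring
        have hm2 : 0 < (M.eval x)^2 := by positivity
        have hGu : ((a.eval x)^2 - 4*M.eval x*b.eval x)
            * (M.eval x*c.eval x - N.eval x*a.eval x)^2 ≤ 0 := by
          nlinarith [sq_nonneg (M.eval x*c.eval x - N.eval x*a.eval x)]
        nlinarith [hid, hGu, mul_pos hm2 hxpos,
          sq_nonneg (2*M.eval x*(M.eval x*d.eval x - N.eval x*b.eval x)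
              - a.eval x*(M.eval x*c.eval x - N.eval x*a.eval x))]
      obtain ⟨β, hβ⟩ := ptQuad (M.eval α) (a.eval α) (b.eval α) hm hdisc
      refine ⟨α, β, by linarith [hβ], ?_⟩
      have hq : M.eval α * (N.eval α * β^2 + c.eval α * β + d.eval α) = 0 := by
        linear_combination N.eval α * hβ - β * hu + hv
      have := (mul_eq_zero.mp hq).resolve_left hm
      linarith [this]
    · obtain ⟨β, h1, h2⟩ := ptA (M.eval α) (a.eval α) (b.eval α)
        (N.eval α) (c.eval α) (d.eval α) h0 hu
      exact ⟨α, β, by linarith [h1], by linarith [h2]⟩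
  · rintro α ⟨hN, hRα, hMα, z, hz⟩
    have hn : N.eval α ≠ 0 := fun h => hN α ⟨hRα, h⟩
    have h0 : (M.eval α * c.eval α - N.eval α * a.eval α) *
        (a.eval α * d.eval α - b.eval α * c.eval α) -
        (M.eval α * d.eval α - N.eval α * b.eval α)^2 = 0 := (hev α).symm.trans hRα
    constructor
    · rintro ⟨β, hp, hq⟩
      by_cases ha : a.eval α = 0
      · right
        have hb : b.eval α = 0 := by
          rw [hMα, ha] at hp
          simpa using hp
        refine ⟨⟨hMα, ha, hb⟩, ?_⟩
        have h4 : (2*N.eval α*β + c.eval α)^2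
            = (c.eval α)^2 - 4*N.eval α*d.eval α := by
          linear_combination 4*N.eval α*hq
        have := sq_nonneg (2*N.eval α*β + c.eval α)
        linarith
      · exact Or.inl ha
    · rintro (ha | ⟨⟨_, ha, hb⟩, hdisc⟩)
      · have h2 : (a.eval α)^2 * d.eval α - a.eval α * b.eval α * c.eval α
            + N.eval α * (b.eval α)^2 = 0 := by
          have h3 : N.eval α * ((a.eval α)^2 * d.eval α
              - a.eval α * b.eval α * c.eval α + N.eval α * (b.eval α)^2) = 0 := by
            rw [hMα] at h0
            linear_combination (-1) * h0
          exact (mul_eq_zero.mp h3).resolve_left hn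
        have hβa : (-b.eval α / a.eval α) * a.eval α = -b.eval α :=
          div_mul_cancel₀ _ ha
        refine ⟨-b.eval α / a.eval α, ?_, ?_⟩
        · rw [hMα]
          have h5 : a.eval α * (-b.eval α / a.eval α) = -b.eval α := by
            rw [mul_comm]; exact hβa
          rw [h5]; ring
        · have hQ : (N.eval α * (-b.eval α / a.eval α)^2
              + c.eval α * (-b.eval α / a.eval α) + d.eval α) * (a.eval α)^2 = 0 := by
            linear_combination (N.eval α * ((-b.eval α / a.eval α) * a.eval α + -b.eval α)
              + c.eval α * a.eval α) * hβa + h2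
          have h6 := (mul_eq_zero.mp hQ).resolve_right (pow_ne_zero 2 ha)
          linarith [h6]
      · obtain ⟨β, hβ⟩ := ptQuad (N.eval α) (c.eval α) (d.eval α) hn (by linarith)
        exact ⟨β, by rw [hMα, ha, hb]; ring, by linarith [hβ]⟩
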